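/- arXiv:2506.19869 — 10 statements merged into one kernel-verified Lean document; each statement's English description precedes it below -/
import Mathlib

section
/- Let (S, V, E, I, T, R) : [0, ∞) → ℝ⁶ be a differentiable solution of the SVEITRS system with initial conditions S(0) > 0, V(0) ≥ 0, E(0) ≥ 0, I(0) ≥ 0, T(0) ≥ 0, R(0) ≥ 0. Then S(t) ≥ 0, V(t) ≥ 0, E(t) ≥ 0, I(t) ≥ 0, T(t) ≥ 0 and R(t) ≥ 0 for all t ≥ 0. -/
open Set Filter Topology

private lemma sveitrs_touch (g : ℝ → ℝ) (t₀ d : ℝ) (ht₀ : 0 < t₀)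
    (hg : HasDerivAt g d t₀) (h0 : g t₀ = 0) (hd : 0 < d)
    (hpos : ∀ s, 0 ≤ s → s < t₀ → 0 < g s) : False := by
  have hslope : Tendsto (slope g t₀) (𝓝[≠] t₀) (𝓝 d) :=
    hasDerivAt_iff_tendsto_slope.mp hg
  have hsub : 𝓝[<] t₀ ≤ 𝓝[≠] t₀ :=
    nhdsWithin_mono _ (fun x hx => ne_of_lt hx)
  have h1 : ∀ᶠ s in 𝓝[<] t₀, 0 < slope g t₀ s :=
    (hslope.mono_left hsub).eventually (eventually_gt_nhds hd)
  have h2 : ∀ᶠ s in 𝓝[<] t₀, s ∈ Ioo 0 t₀ :=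
    Ioo_mem_nhdsLT_of_mem ⟨ht₀, le_refl _⟩
  obtain ⟨s, hs1, hs2⟩ := (h1.and h2).exists
  have hgs : 0 < g s := hpos s hs2.1.le hs2.2
  have hneg : slope g t₀ s < 0 := by
    rw [slope_def_field, h0, sub_zero]
    exact div_neg_of_pos_of_neg hgs (by linarith [hs2.2])
  linarith

private lemma sveitrs_leftlim (g : ℝ → ℝ) (t₀ : ℝ) (ht₀ : 0 < t₀)
    (hc : ContinuousAt g t₀) (hpos : ∀ s, 0 ≤ s → s < t₀ → 0 < g s) : 0 ≤ g t₀ := by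
  have htend : Tendsto g (𝓝[<] t₀) (𝓝 (g t₀)) :=
    hc.tendsto.mono_left nhdsWithin_le_nhds
  have hev : ∀ᶠ s in 𝓝[<] t₀, 0 ≤ g s :=
    eventually_of_mem (Ioo_mem_nhdsLT_of_mem ⟨ht₀, le_refl _⟩)
      (fun s hs => (hpos s hs.1.le hs.2).le)
  exact ge_of_tendsto htend hev

private lemma sveitrs_prod (a b e M : ℝ) (ha : -e ≤ a) (hb : -e ≤ b)
    (haM : a ≤ M) (hbM : b ≤ M) (he : 0 ≤ e) (hM : 0 ≤ M) : -(e*M) ≤ a*b := by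
  rcases le_or_gt 0 a with h | h
  · nlinarith
  · rcases le_or_gt 0 b with h' | h'
    · nlinarith
    · nlinarith

/-- Positivity of solutions of the SVEITRS tuberculosis model: a differentiable
solution on `[0, ∞)` with nonnegative initial data (and `S 0 > 0`) stays
nonnegative in every compartment. -/
theorem sveitrs_positivity
    (Λ β γ μ π η θ δ τ α ω : ℝ)
    (hΛ : 0 < Λ) (hβ : 0 < β) (hγ : 0 < γ) (hμ : 0 < μ) (hπ : 0 < π)
    (hη : 0 < η) (hθ : 0 < θ) (hδ : 0 < δ) (hτ : 0 < τ) (hα : 0 < α) (hω : 0 < ω)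
    (S V E I T R : ℝ → ℝ)
    (hS : ∀ t ≥ (0 : ℝ),
      HasDerivAt S (Λ + η * R t + θ * V t - (β * I t + π + μ) * S t) t)
    (hV : ∀ t ≥ (0 : ℝ), HasDerivAt V (π * S t - (θ + μ) * V t) t)
    (hE : ∀ t ≥ (0 : ℝ), HasDerivAt E (β * S t * I t - (γ + μ) * E t) t)
    (hI : ∀ t ≥ (0 : ℝ), HasDerivAt I (γ * E t - (δ + τ + μ) * I t) t)
    (hT : ∀ t ≥ (0 : ℝ), HasDerivAt T (δ * I t - (α + ω + μ) * T t) t)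
    (hR : ∀ t ≥ (0 : ℝ), HasDerivAt R (α * T t - (η + μ) * R t) t)
    (hS0 : 0 < S 0) (hV0 : 0 ≤ V 0) (hE0 : 0 ≤ E 0) (hI0 : 0 ≤ I 0)
    (hT0 : 0 ≤ T 0) (hR0 : 0 ≤ R 0) :
    ∀ t ≥ (0 : ℝ),
      0 ≤ S t ∧ 0 ≤ V t ∧ 0 ≤ E t ∧ 0 ≤ I t ∧ 0 ≤ T t ∧ 0 ≤ R t := by
  intro t ht
  -- continuity on [0, t]
  have cS : ContinuousOn S (Icc 0 t) := fun s hs => ((hS s hs.1).continuousAt).continuousWithinAt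
  have cV : ContinuousOn V (Icc 0 t) := fun s hs => ((hV s hs.1).continuousAt).continuousWithinAt
  have cE : ContinuousOn E (Icc 0 t) := fun s hs => ((hE s hs.1).continuousAt).continuousWithinAt
  have cI : ContinuousOn I (Icc 0 t) := fun s hs => ((hI s hs.1).continuousAt).continuousWithinAt
  have cT : ContinuousOn T (Icc 0 t) := fun s hs => ((hT s hs.1).continuousAt).continuousWithinAt
  have cR : ContinuousOn R (Icc 0 t) := fun s hs => ((hR s hs.1).continuousAt).continuousWithinAt
  -- bound on S and I
  obtain ⟨CS, hCS⟩ := isCompact_Icc.exists_bound_of_continuousOn cS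
  obtain ⟨CI, hCI⟩ := isCompact_Icc.exists_bound_of_continuousOn cI
  set M : ℝ := max 0 (max CS CI) with hM_def
  have hM0 : 0 ≤ M := le_max_left _ _
  have hMS : ∀ s ∈ Icc (0:ℝ) t, |S s| ≤ M := fun s hs =>
    (hCS s hs).trans ((le_max_left _ _).trans (le_max_right _ _))
  have hMI : ∀ s ∈ Icc (0:ℝ) t, |I s| ≤ M := fun s hs =>
    (hCI s hs).trans ((le_max_right _ _).trans (le_max_right _ _))
  set K : ℝ := β*M + π + η + θ + γ + δ + α + 1 with hK_def
  have hK0 : 0 ≤ K := by positivity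
  -- key perturbation claim
  have key : ∀ ε > (0:ℝ), ∀ s ∈ Icc (0:ℝ) t,
      0 < S s + ε * Real.exp (K*s) ∧ 0 < V s + ε * Real.exp (K*s) ∧
      0 < E s + ε * Real.exp (K*s) ∧ 0 < I s + ε * Real.exp (K*s) ∧
      0 < T s + ε * Real.exp (K*s) ∧ 0 < R s + ε * Real.exp (K*s) := by
    intro ε hε
    have hec : Continuous (fun s : ℝ => ε * Real.exp (K*s)) := by fun_prop
    set A : Set ℝ := {s : ℝ | s ∈ Icc (0:ℝ) t ∧
        (S s + ε * Real.exp (K*s) ≤ 0 ∨ V s + ε * Real.exp (K*s) ≤ 0 ∨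
         E s + ε * Real.exp (K*s) ≤ 0 ∨ I s + ε * Real.exp (K*s) ≤ 0 ∨
         T s + ε * Real.exp (K*s) ≤ 0 ∨ R s + ε * Real.exp (K*s) ≤ 0)} with hA_def
    have hAeq : A =
        (Icc (0:ℝ) t ∩ (fun s => S s + ε * Real.exp (K*s)) ⁻¹' Iic 0) ∪
        (Icc (0:ℝ) t ∩ (fun s => V s + ε * Real.exp (K*s)) ⁻¹' Iic 0) ∪
        (Icc (0:ℝ) t ∩ (fun s => E s + ε * Real.exp (K*s)) ⁻¹' Iic 0) ∪
        (Icc (0:ℝ) t ∩ (fun s => I s + ε * Real.exp (K*s)) ⁻¹' Iic 0) ∪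
        (Icc (0:ℝ) t ∩ (fun s => T s + ε * Real.exp (K*s)) ⁻¹' Iic 0) ∪
        (Icc (0:ℝ) t ∩ (fun s => R s + ε * Real.exp (K*s)) ⁻¹' Iic 0) := by
      ext x
      simp only [hA_def, mem_setOf_eq, mem_union, mem_inter_iff, mem_preimage, mem_Iic]
      tauto
    have hclosed : IsClosed A := by
      rw [hAeq]
      refine (((((((cS.add hec.continuousOn).preimage_isClosed_of_isClosed isClosed_Icc
        isClosed_Iic).union ?_).union ?_).union ?_).union ?_).union ?_)
      · exact (cV.add hec.continuousOn).preimage_isClosed_of_isClosed isClosed_Icc isClosed_Iic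
      · exact (cE.add hec.continuousOn).preimage_isClosed_of_isClosed isClosed_Icc isClosed_Iic
      · exact (cI.add hec.continuousOn).preimage_isClosed_of_isClosed isClosed_Icc isClosed_Iic
      · exact (cT.add hec.continuousOn).preimage_isClosed_of_isClosed isClosed_Icc isClosed_Iic
      · exact (cR.add hec.continuousOn).preimage_isClosed_of_isClosed isClosed_Icc isClosed_Iic
    have hnone : ¬ A.Nonempty := by
      intro hne
      have hbdd : BddBelow A := ⟨0, fun x hx => hx.1.1⟩
      set t₀ : ℝ := sInf A with ht₀_def
      have ht₀A : t₀ ∈ A := hclosed.csInf_mem hne hbdd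
      have ht0mem : t₀ ∈ Icc (0:ℝ) t := ht₀A.1
      have hbefore : ∀ s, 0 ≤ s → s < t₀ →
          0 < S s + ε * Real.exp (K*s) ∧ 0 < V s + ε * Real.exp (K*s) ∧
          0 < E s + ε * Real.exp (K*s) ∧ 0 < I s + ε * Real.exp (K*s) ∧
          0 < T s + ε * Real.exp (K*s) ∧ 0 < R s + ε * Real.exp (K*s) := by
        intro s h1 h2
        have hsIcc : s ∈ Icc (0:ℝ) t := ⟨h1, h2.le.trans ht0mem.2⟩
        have hsA : s ∉ A := fun hsA => absurd (csInf_le hbdd hsA) (not_le.mpr h2)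
        rw [hA_def] at hsA
        simp only [mem_setOf_eq, not_and, not_or, not_le] at hsA
        exact hsA hsIcc
      have ht₀pos : 0 < t₀ := by
        rcases lt_or_eq_of_le ht0mem.1 with h | h
        · exact h
        · exfalso
          have hdisj := ht₀A.2
          rw [← h] at hdisj
          simp only [mul_zero, Real.exp_zero, mul_one] at hdisj
          rcases hdisj with h'|h'|h'|h'|h'|h' <;> linarith
      -- left limits: every component is ≥ -ε exp(K t₀) at t₀
      have hgeS : 0 ≤ S t₀ + ε * Real.exp (K*t₀) :=
        sveitrs_leftlim _ t₀ ht₀pos (((hS t₀ ht0mem.1).continuousAt).add hec.continuousAt)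
          (fun s a b => (hbefore s a b).1)
      have hgeV : 0 ≤ V t₀ + ε * Real.exp (K*t₀) :=
        sveitrs_leftlim _ t₀ ht₀pos (((hV t₀ ht0mem.1).continuousAt).add hec.continuousAt)
          (fun s a b => (hbefore s a b).2.1)
      have hgeE : 0 ≤ E t₀ + ε * Real.exp (K*t₀) :=
        sveitrs_leftlim _ t₀ ht₀pos (((hE t₀ ht0mem.1).continuousAt).add hec.continuousAt)
          (fun s a b => (hbefore s a b).2.2.1)
      have hgeI : 0 ≤ I t₀ + ε * Real.exp (K*t₀) :=
        sveitrs_leftlim _ t₀ ht₀pos (((hI t₀ ht0mem.1).continuousAt).add hec.continuousAt)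
          (fun s a b => (hbefore s a b).2.2.2.1)
      have hgeT : 0 ≤ T t₀ + ε * Real.exp (K*t₀) :=
        sveitrs_leftlim _ t₀ ht₀pos (((hT t₀ ht0mem.1).continuousAt).add hec.continuousAt)
          (fun s a b => (hbefore s a b).2.2.2.2.1)
      have hgeR : 0 ≤ R t₀ + ε * Real.exp (K*t₀) :=
        sveitrs_leftlim _ t₀ ht₀pos (((hR t₀ ht0mem.1).continuousAt).add hec.continuousAt)
          (fun s a b => (hbefore s a b).2.2.2.2.2)
      have hP : 0 < ε * Real.exp (K*t₀) := by positivity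
      have hexp : HasDerivAt (fun s : ℝ => ε * Real.exp (K * s))
          (ε * (Real.exp (K * t₀) * K)) t₀ := by
        have h1 : HasDerivAt (fun s : ℝ => K * s) K t₀ := by
          simpa using (hasDerivAt_id t₀).const_mul K
        exact ((Real.hasDerivAt_exp (K * t₀)).comp t₀ h1).const_mul ε
      have hKP : K * (ε * Real.exp (K*t₀)) =
          β*M*(ε * Real.exp (K*t₀)) + π*(ε * Real.exp (K*t₀)) + η*(ε * Real.exp (K*t₀)) +
          θ*(ε * Real.exp (K*t₀)) + γ*(ε * Real.exp (K*t₀)) + δ*(ε * Real.exp (K*t₀)) +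
          α*(ε * Real.exp (K*t₀)) + (ε * Real.exp (K*t₀)) := by
        rw [hK_def]; ring
      have hbMP : 0 ≤ β*M*(ε * Real.exp (K*t₀)) :=
        mul_nonneg (mul_nonneg hβ.le hM0) hP.le
      have hSub : S t₀ ≤ M := (abs_le.mp (hMS t₀ ht0mem)).2
      have hSlb : -M ≤ S t₀ := (abs_le.mp (hMS t₀ ht0mem)).1
      have hIub : I t₀ ≤ M := (abs_le.mp (hMI t₀ ht0mem)).2
      have hIlb : -M ≤ I t₀ := (abs_le.mp (hMI t₀ ht0mem)).1
      rcases ht₀A.2 with hc|hc|hc|hc|hc|hc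
      · -- S touches
        have hx : S t₀ = -(ε * Real.exp (K*t₀)) := by linarith
        refine sveitrs_touch _ t₀ _ ht₀pos ((hS t₀ ht0mem.1).add hexp) (by simp only [Pi.add_apply]; linarith) ?_
          (fun s a b => (hbefore s a b).1)
        have h3 : β*(-M)*(ε * Real.exp (K*t₀)) ≤ β*(I t₀)*(ε * Real.exp (K*t₀)) :=
          mul_le_mul_of_nonneg_right (mul_le_mul_of_nonneg_left hIlb hβ.le) hP.le
        rw [hx]
        linarith [hKP, h3,
          mul_le_mul_of_nonneg_left (by linarith : -(ε * Real.exp (K*t₀)) ≤ R t₀) hη.le,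
          mul_le_mul_of_nonneg_left (by linarith : -(ε * Real.exp (K*t₀)) ≤ V t₀) hθ.le,
          mul_pos hπ hP, mul_pos hμ hP, mul_pos hγ hP, mul_pos hδ hP, mul_pos hα hP, hP]
      · -- V touches
        have hx : V t₀ = -(ε * Real.exp (K*t₀)) := by linarith
        refine sveitrs_touch _ t₀ _ ht₀pos ((hV t₀ ht0mem.1).add hexp) (by simp only [Pi.add_apply]; linarith) ?_
          (fun s a b => (hbefore s a b).2.1)
        rw [hx]
        linarith [hKP,
          mul_le_mul_of_nonneg_left (by linarith : -(ε * Real.exp (K*t₀)) ≤ S t₀) hπ.le,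
          mul_pos hθ hP, mul_pos hμ hP, mul_pos hη hP, mul_pos hγ hP, mul_pos hδ hP,
          mul_pos hα hP, hbMP, hP]
      · -- E touches
        have hx : E t₀ = -(ε * Real.exp (K*t₀)) := by linarith
        refine sveitrs_touch _ t₀ _ ht₀pos ((hE t₀ ht0mem.1).add hexp) (by simp only [Pi.add_apply]; linarith) ?_
          (fun s a b => (hbefore s a b).2.2.1)
        have hprod : -((ε * Real.exp (K*t₀))*M) ≤ S t₀ * I t₀ :=
          sveitrs_prod _ _ _ _ (by linarith) (by linarith) hSub hIub hP.le hM0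
        have h3 : β*(-((ε * Real.exp (K*t₀))*M)) ≤ β*(S t₀ * I t₀) :=
          mul_le_mul_of_nonneg_left hprod hβ.le
        rw [hx]
        linarith [hKP, h3, mul_pos hπ hP, mul_pos hμ hP, mul_pos hη hP, mul_pos hθ hP,
          mul_pos hδ hP, mul_pos hα hP, mul_pos hγ hP, hP]
      · -- I touches
        have hx : I t₀ = -(ε * Real.exp (K*t₀)) := by linarith
        refine sveitrs_touch _ t₀ _ ht₀pos ((hI t₀ ht0mem.1).add hexp) (by simp only [Pi.add_apply]; linarith) ?_
          (fun s a b => (hbefore s a b).2.2.2.1)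
        rw [hx]
        linarith [hKP,
          mul_le_mul_of_nonneg_left (by linarith : -(ε * Real.exp (K*t₀)) ≤ E t₀) hγ.le,
          mul_pos hδ hP, mul_pos hτ hP, mul_pos hμ hP, mul_pos hπ hP, mul_pos hη hP,
          mul_pos hθ hP, mul_pos hα hP, hbMP, hP]
      · -- T touches
        have hx : T t₀ = -(ε * Real.exp (K*t₀)) := by linarith
        refine sveitrs_touch _ t₀ _ ht₀pos ((hT t₀ ht0mem.1).add hexp) (by simp only [Pi.add_apply]; linarith) ?_
          (fun s a b => (hbefore s a b).2.2.2.2.1)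
        rw [hx]
        linarith [hKP,
          mul_le_mul_of_nonneg_left (by linarith : -(ε * Real.exp (K*t₀)) ≤ I t₀) hδ.le,
          mul_pos hα hP, mul_pos hω hP, mul_pos hμ hP, mul_pos hπ hP, mul_pos hη hP,
          mul_pos hθ hP, mul_pos hγ hP, hbMP, hP]
      · -- R touches
        have hx : R t₀ = -(ε * Real.exp (K*t₀)) := by linarith
        refine sveitrs_touch _ t₀ _ ht₀pos ((hR t₀ ht0mem.1).add hexp) (by simp only [Pi.add_apply]; linarith) ?_
          (fun s a b => (hbefore s a b).2.2.2.2.2)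
        rw [hx]
        linarith [hKP,
          mul_le_mul_of_nonneg_left (by linarith : -(ε * Real.exp (K*t₀)) ≤ T t₀) hα.le,
          mul_pos hη hP, mul_pos hμ hP, mul_pos hπ hP, mul_pos hθ hP, mul_pos hγ hP,
          mul_pos hδ hP, hbMP, hP]
    intro s hs
    have hsA : s ∉ A := fun h => hnone ⟨s, h⟩
    rw [hA_def] at hsA
    simp only [mem_setOf_eq, not_and, not_or, not_le] at hsA
    exact hsA hs
  -- pass to the limit ε → 0
  have gen : ∀ X : ℝ, (∀ ε > (0:ℝ), 0 < X + ε * Real.exp (K*t)) → 0 ≤ X := by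
    intro X h
    by_contra hn
    push_neg at hn
    have hEp : 0 < Real.exp (K*t) := Real.exp_pos _
    have h' := h (-X / (2*Real.exp (K*t))) (div_pos (by linarith) (by positivity))
    have heq : -X / (2*Real.exp (K*t)) * Real.exp (K*t) = -X/2 := by
      field_simp
    rw [heq] at h'
    linarith
  have htt : t ∈ Icc (0:ℝ) t := ⟨ht, le_refl t⟩
  exact ⟨gen (S t) (fun ε hε => (key ε hε t htt).1),
         gen (V t) (fun ε hε => (key ε hε t htt).2.1),
         gen (E t) (fun ε hε => (key ε hε t htt).2.2.1),
         gen (I t) (fun ε hε => (key ε hε t htt).2.2.2.1),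
         gen (T t) (fun ε hε => (key ε hε t htt).2.2.2.2.1),
         gen (R t) (fun ε hε => (key ε hε t htt).2.2.2.2.2)⟩
end

section
/- Let (S, V, E, I, T, R) : [0, ∞) → ℝ⁶ be a differentiable solution of the SVEITRS system whose components I(t) and T(t) are nonnegative for all t ≥ 0, and set N(t) = S(t) + V(t) + E(t) + I(t) + T(t) + R(t). If N(0) ≤ Λ/μ, then N(t) ≤ Λ/μ for all t ≥ 0. -/
/-- Boundedness of the total population of the SVEITRS tuberculosis model: if
`I` and `T` stay nonnegative and the total population starts below `Λ/μ`, it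
stays below `Λ/μ` for all `t ≥ 0`. -/
theorem sveitrs_total_population_bounded
    (Λ β γ μ π η θ δ τ α ω : ℝ)
    (hΛ : 0 < Λ) (hβ : 0 < β) (hγ : 0 < γ) (hμ : 0 < μ) (hπ : 0 < π)
    (hη : 0 < η) (hθ : 0 < θ) (hδ : 0 < δ) (hτ : 0 < τ) (hα : 0 < α) (hω : 0 < ω)
    (S V E I T R : ℝ → ℝ)
    (hS : ∀ t ≥ (0 : ℝ),
      HasDerivAt S (Λ + η * R t + θ * V t - (β * I t + π + μ) * S t) t)
    (hV : ∀ t ≥ (0 : ℝ), HasDerivAt V (π * S t - (θ + μ) * V t) t)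
    (hE : ∀ t ≥ (0 : ℝ), HasDerivAt E (β * S t * I t - (γ + μ) * E t) t)
    (hI : ∀ t ≥ (0 : ℝ), HasDerivAt I (γ * E t - (δ + τ + μ) * I t) t)
    (hT : ∀ t ≥ (0 : ℝ), HasDerivAt T (δ * I t - (α + ω + μ) * T t) t)
    (hR : ∀ t ≥ (0 : ℝ), HasDerivAt R (α * T t - (η + μ) * R t) t)
    (hInonneg : ∀ t ≥ (0 : ℝ), 0 ≤ I t)
    (hTnonneg : ∀ t ≥ (0 : ℝ), 0 ≤ T t)
    (hN0 : S 0 + V 0 + E 0 + I 0 + T 0 + R 0 ≤ Λ / μ) :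
    ∀ t ≥ (0 : ℝ), S t + V t + E t + I t + T t + R t ≤ Λ / μ := by
  set g : ℝ → ℝ := fun t =>
    (S t + V t + E t + I t + T t + R t - Λ / μ) * Real.exp (μ * t) with hg
  have hderiv : ∀ t ≥ (0 : ℝ),
      HasDerivAt g (Real.exp (μ * t) * (-(τ * I t) - ω * T t)) t := by
    intro t ht
    have hexp : HasDerivAt (fun t => Real.exp (μ * t)) (Real.exp (μ * t) * μ) t := by
      simpa [mul_comm] using ((hasDerivAt_id t).const_mul μ).exp
    have hsum : HasDerivAt (fun t => S t + V t + E t + I t + T t + R t - Λ / μ)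
        ((Λ + η * R t + θ * V t - (β * I t + π + μ) * S t)
          + (π * S t - (θ + μ) * V t) + (β * S t * I t - (γ + μ) * E t)
          + (γ * E t - (δ + τ + μ) * I t) + (δ * I t - (α + ω + μ) * T t)
          + (α * T t - (η + μ) * R t)) t := by
      exact ((((((hS t ht).add (hV t ht)).add (hE t ht)).add (hI t ht)).add
        (hT t ht)).add (hR t ht)).sub_const _
    have := hsum.mul hexp
    refine HasDerivAt.congr_deriv this ?_
    have hμ' : μ ≠ 0 := ne_of_gt hμ
    linear_combination (-Real.exp (μ * t)) * (div_mul_cancel₀ Λ hμ')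
  have hcont : ContinuousOn g (Set.Ici (0 : ℝ)) := fun t ht =>
    (hderiv t ht).differentiableAt.continuousAt.continuousWithinAt
  have hanti : AntitoneOn g (Set.Ici (0 : ℝ)) := by
    apply antitoneOn_of_deriv_nonpos (convex_Ici 0) hcont
      (fun t ht => by
        rw [interior_Ici] at ht
        exact (hderiv t ht.le).differentiableAt.differentiableWithinAt)
    intro t ht
    rw [interior_Ici] at ht
    rw [(hderiv t (le_of_lt ht)).deriv]
    have h1 : 0 ≤ τ * I t := mul_nonneg hτ.le (hInonneg t ht.le)
    have h2 : 0 ≤ ω * T t := mul_nonneg hω.le (hTnonneg t ht.le)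
    have : -(τ * I t) - ω * T t ≤ 0 := by linarith
    exact mul_nonpos_of_nonneg_of_nonpos (Real.exp_pos _).le this
  intro t ht
  have h0 : g t ≤ g 0 := hanti (Set.self_mem_Ici) ht ht
  have hg0 : g 0 ≤ 0 := by
    simp only [hg, mul_zero, Real.exp_zero, mul_one]
    linarith
  have hgt : g t ≤ 0 := le_trans h0 hg0
  have hexp : 0 < Real.exp (μ * t) := Real.exp_pos _
  have hx : (S t + V t + E t + I t + T t + R t - Λ / μ) * Real.exp (μ * t)
      ≤ 0 * Real.exp (μ * t) := by simpa [hg] using hgt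
  have := le_of_mul_le_mul_right hx hexp
  linarith
end

section
/- The region Ω = {(S, V, E, I, T, R) ∈ ℝ⁶ : S ≥ 0, V ≥ 0, E ≥ 0, I ≥ 0, T ≥ 0, R ≥ 0 and S + V + E + I + T + R ≤ Λ/μ} is positively invariant for the SVEITRS system: if a differentiable solution of the system with S(0) > 0 starts in Ω at time 0, then it remains in Ω for all t ≥ 0. -/
open Set Filter

lemma left_min_deriv_nonpos {g : ℝ → ℝ} {g' a b : ℝ} (hab : a < b)
    (hg : HasDerivAt g g' b) (hmin : ∀ s ∈ Set.Icc a b, g b ≤ g s) :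
    g' ≤ 0 := by
  have h : HasDerivWithinAt g g' (Set.Iio b) b := hg.hasDerivWithinAt
  have hslope := (hasDerivWithinAt_iff_tendsto_slope' (by simp)).mp h
  refine le_of_tendsto hslope ?_
  filter_upwards [Ioo_mem_nhdsLT hab] with s hs
  have h1 : g b ≤ g s := hmin s ⟨hs.1.le, hs.2.le⟩
  rw [slope_def_field]
  exact div_nonpos_iff.mpr (Or.inl ⟨by linarith, by linarith [hs.2]⟩)

set_option maxHeartbeats 2000000 in
/-- The region `Ω = {(S,V,E,I,T,R) : all coordinates nonnegative and
`S+V+E+I+T+R ≤ Λ/μ`}` is positively invariant for the SVEITRS tuberculosis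
model (for solutions with `S 0 > 0`). -/
theorem sveitrs_invariant_region
    (Λ β γ μ π η θ δ τ α ω : ℝ)
    (hΛ : 0 < Λ) (hβ : 0 < β) (hγ : 0 < γ) (hμ : 0 < μ) (hπ : 0 < π)
    (hη : 0 < η) (hθ : 0 < θ) (hδ : 0 < δ) (hτ : 0 < τ) (hα : 0 < α) (hω : 0 < ω)
    (S V E I T R : ℝ → ℝ)
    (hS : ∀ t ≥ (0 : ℝ),
      HasDerivAt S (Λ + η * R t + θ * V t - (β * I t + π + μ) * S t) t)
    (hV : ∀ t ≥ (0 : ℝ), HasDerivAt V (π * S t - (θ + μ) * V t) t)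
    (hE : ∀ t ≥ (0 : ℝ), HasDerivAt E (β * S t * I t - (γ + μ) * E t) t)
    (hI : ∀ t ≥ (0 : ℝ), HasDerivAt I (γ * E t - (δ + τ + μ) * I t) t)
    (hT : ∀ t ≥ (0 : ℝ), HasDerivAt T (δ * I t - (α + ω + μ) * T t) t)
    (hR : ∀ t ≥ (0 : ℝ), HasDerivAt R (α * T t - (η + μ) * R t) t)
    (hS0 : 0 < S 0) (hV0 : 0 ≤ V 0) (hE0 : 0 ≤ E 0) (hI0 : 0 ≤ I 0)
    (hT0 : 0 ≤ T 0) (hR0 : 0 ≤ R 0)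
    (hN0 : S 0 + V 0 + E 0 + I 0 + T 0 + R 0 ≤ Λ / μ) :
    ∀ t ≥ (0 : ℝ),
      0 ≤ S t ∧ 0 ≤ V t ∧ 0 ≤ E t ∧ 0 ≤ I t ∧ 0 ≤ T t ∧ 0 ≤ R t ∧
      S t + V t + E t + I t + T t + R t ≤ Λ / μ := by
  have hΛμ : 0 < Λ / μ := div_pos hΛ hμ
  have hμΛ : μ * (Λ / μ) = Λ := by field_simp
  obtain ⟨M, hM⟩ : ∃ M : ℝ, M = Λ / μ + 11 := ⟨_, rfl⟩
  have hM1 : (1 : ℝ) ≤ M := by linarith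
  have hβM : 0 < β * M := mul_pos hβ (by linarith)
  have hβM1 : β ≤ β * M := by nlinarith [mul_le_mul_of_nonneg_left hM1 hβ.le]
  obtain ⟨C, hC⟩ : ∃ C : ℝ, C = 6 * (1 + η + θ + β * M + π + μ + γ + δ + α + τ + ω) := ⟨_, rfl⟩
  have hC0 : 0 < C := by linarith
  -- Key perturbed claim
  have key : ∀ t0 : ℝ, 0 ≤ t0 → ∀ ε : ℝ, 0 < ε → ε * Real.exp (C * t0) ≤ 1 →
      ∀ t ∈ Set.Icc (0 : ℝ) t0,
        -(ε * Real.exp (C * t)) ≤ S t ∧ -(ε * Real.exp (C * t)) ≤ V t ∧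
        -(ε * Real.exp (C * t)) ≤ E t ∧ -(ε * Real.exp (C * t)) ≤ I t ∧
        -(ε * Real.exp (C * t)) ≤ T t ∧ -(ε * Real.exp (C * t)) ≤ R t ∧
        S t + V t + E t + I t + T t + R t ≤ Λ / μ + 6 * (ε * Real.exp (C * t)) := by
    intro t0 ht0 ε hε hεs
    obtain ⟨e, he⟩ : ∃ e : ℝ → ℝ, e = fun t => ε * Real.exp (C * t) := ⟨_, rfl⟩
    obtain ⟨f, hf⟩ : ∃ f : ℝ → ℝ, f = fun t =>
      min (min (min (S t + e t) (V t + e t)) (min (E t + e t) (I t + e t)))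
          (min (min (T t + e t) (R t + e t))
               (Λ / μ + 6 * e t - (S t + V t + E t + I t + T t + R t))) := ⟨_, rfl⟩
    have he_cont : Continuous e := by rw [he]; continuity
    have he' : ∀ t : ℝ, HasDerivAt e (C * e t) t := by
      intro t
      have h1 : HasDerivAt (fun s : ℝ => C * s) C t := by
        simpa using (hasDerivAt_id t).const_mul C
      have h2 := (h1.exp).const_mul ε
      rw [he]
      convert h2 using 1
      · rfl
      · rfl
      ring
    have main : ∀ t ∈ Set.Icc (0 : ℝ) t0, 0 ≤ f t := by
      by_contra hcon
      push_neg at hcon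
      obtain ⟨t1, ht1, ht1'⟩ := hcon
      set B : Set ℝ := Set.Icc (0 : ℝ) t0 ∩ f ⁻¹' Set.Iic 0 with hB
      have hBne : B.Nonempty := ⟨t1, ht1, le_of_lt ht1'⟩
      have hBdd : BddBelow B := ⟨0, fun x hx => hx.1.1⟩
      have hfca : ∀ t ∈ Set.Icc (0 : ℝ) t0, ContinuousAt f t := by
        intro t ht
        have cS := (hS t ht.1).continuousAt
        have cV := (hV t ht.1).continuousAt
        have cE := (hE t ht.1).continuousAt
        have cI := (hI t ht.1).continuousAt
        have cT := (hT t ht.1).continuousAt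
        have cR := (hR t ht.1).continuousAt
        have ce := he_cont.continuousAt (x := t)
        rw [hf]
        exact (((cS.add ce).min (cV.add ce)).min ((cE.add ce).min (cI.add ce))).min
          ((((cT.add ce).min (cR.add ce))).min
            ((continuousAt_const.add (continuousAt_const.mul ce)).sub
              (((((cS.add cV).add cE).add cI).add cT).add cR)))
      have hfc : ContinuousOn f (Set.Icc (0 : ℝ) t0) :=
        fun t ht => (hfca t ht).continuousWithinAt
      have hBclosed : IsClosed B := by
        rw [hB]; exact hfc.preimage_isClosed_of_isClosed isClosed_Icc isClosed_Iic
      obtain ⟨tstar, htstar⟩ : ∃ t : ℝ, t = sInf B := ⟨_, rfl⟩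
      have htB : tstar ∈ B := by rw [htstar]; exact hBclosed.csInf_mem hBne hBdd
      have hts0 : 0 ≤ tstar := htB.1.1
      have htst0 : tstar ≤ t0 := htB.1.2
      have hfts : f tstar ≤ 0 := htB.2
      have hf0 : 0 < f 0 := by
        simp only [hf, he, lt_min_iff, mul_zero, Real.exp_zero, mul_one]
        refine ⟨⟨⟨by linarith, by linarith⟩, by linarith, by linarith⟩,
          ⟨by linarith, by linarith⟩, by linarith⟩
      have htpos : 0 < tstar := by
        rcases hts0.eq_or_lt with h | h
        · exfalso; rw [← h] at hfts; linarith
        · exact h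
      have hless : ∀ s : ℝ, 0 ≤ s → s < tstar → 0 < f s := by
        intro s hs0 hst
        by_contra h
        push_neg at h
        exact notMem_of_lt_csInf (htstar ▸ hst) hBdd ⟨⟨hs0, le_trans hst.le htst0⟩, h⟩
      have hfge : 0 ≤ f tstar := by
        have htd : Filter.Tendsto f (nhdsWithin tstar (Set.Iio tstar)) (nhds (f tstar)) :=
          ((hfca tstar ⟨hts0, htst0⟩).tendsto).mono_left nhdsWithin_le_nhds
        refine ge_of_tendsto htd ?_
        filter_upwards [Ioo_mem_nhdsLT htpos] with s hs
        exact (hless s hs.1.le hs.2).le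
      have hfeq : f tstar = 0 := le_antisymm hfts hfge
      have hfall : ∀ s ∈ Set.Icc (0 : ℝ) tstar, 0 ≤ f s := by
        intro s hs
        rcases eq_or_lt_of_le hs.2 with h | h
        · rw [h]; exact hfge
        · exact (hless s hs.1 h).le
      have hterm : ∀ s ∈ Set.Icc (0 : ℝ) tstar,
          0 ≤ S s + e s ∧ 0 ≤ V s + e s ∧ 0 ≤ E s + e s ∧ 0 ≤ I s + e s ∧
          0 ≤ T s + e s ∧ 0 ≤ R s + e s ∧
          0 ≤ Λ / μ + 6 * e s - (S s + V s + E s + I s + T s + R s) := by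
        intro s hs
        have h := hfall s hs
        simp only [hf, le_min_iff] at h
        exact ⟨h.1.1.1, h.1.1.2, h.1.2.1, h.1.2.2, h.2.1.1, h.2.1.2, h.2.2⟩
      have htmem : tstar ∈ Set.Icc (0 : ℝ) tstar := ⟨hts0, le_refl _⟩
      obtain ⟨hSa, hVa, hEa, hIa, hTa, hRa, hNa⟩ := hterm tstar htmem
      have ha0 : 0 < e tstar := by
        simp only [he]; exact mul_pos hε (Real.exp_pos _)
      have ha1 : e tstar ≤ 1 := by
        have h1 : Real.exp (C * tstar) ≤ Real.exp (C * t0) :=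
          Real.exp_le_exp.mpr (mul_le_mul_of_nonneg_left htst0 hC0.le)
        have h2 := mul_nonneg hε.le (sub_nonneg.2 h1)
        simp only [he]
        linarith
      have hSup : S tstar ≤ M := by rw [hM]; linarith
      have hIup : I tstar ≤ M := by rw [hM]; linarith
      -- one of the seven terms vanishes at tstar
      have hcases : S tstar + e tstar = 0 ∨ V tstar + e tstar = 0 ∨
          E tstar + e tstar = 0 ∨ I tstar + e tstar = 0 ∨ T tstar + e tstar = 0 ∨
          R tstar + e tstar = 0 ∨
          Λ / μ + 6 * e tstar - (S tstar + V tstar + E tstar + I tstar + T tstar + R tstar) = 0 := by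
        by_contra hno
        push_neg at hno
        obtain ⟨n1, n2, n3, n4, n5, n6, n7⟩ := hno
        have hpos : 0 < f tstar := by
          simp only [hf, lt_min_iff]
          exact ⟨⟨⟨lt_of_le_of_ne hSa (Ne.symm n1), lt_of_le_of_ne hVa (Ne.symm n2)⟩,
            lt_of_le_of_ne hEa (Ne.symm n3), lt_of_le_of_ne hIa (Ne.symm n4)⟩,
            ⟨lt_of_le_of_ne hTa (Ne.symm n5), lt_of_le_of_ne hRa (Ne.symm n6)⟩,
            lt_of_le_of_ne hNa (Ne.symm n7)⟩
        rw [hfeq] at hpos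
        exact lt_irrefl _ hpos
      rcases hcases with hc | hc | hc | hc | hc | hc | hc
      · -- S case
        have hd : HasDerivAt (fun t => S t + e t)
            ((Λ + η * R tstar + θ * V tstar - (β * I tstar + π + μ) * S tstar) + C * e tstar)
            tstar := (hS tstar hts0).add (he' tstar)
        have hmin : ∀ s ∈ Set.Icc (0 : ℝ) tstar, S tstar + e tstar ≤ S s + e s := by
          intro s hs; rw [hc]; exact (hterm s hs).1
        have hle := left_min_deriv_nonpos htpos hd hmin
        have hsub : (β * I tstar + π + μ) * (S tstar + e tstar) = 0 := by rw [hc, mul_zero]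
        linarith [mul_nonneg hη.le hRa, mul_nonneg hθ.le hVa,
          mul_nonneg (mul_nonneg hβ.le hIa) ha0.le,
          mul_nonneg (mul_nonneg hβ.le ha0.le) (by linarith : (0:ℝ) ≤ 1 - e tstar),
          mul_nonneg (by linarith : (0:ℝ) ≤ C - η - θ - β) ha0.le,
          mul_pos hπ ha0, mul_pos hμ ha0]
      · -- V case
        have hd : HasDerivAt (fun t => V t + e t)
            ((π * S tstar - (θ + μ) * V tstar) + C * e tstar) tstar :=
          (hV tstar hts0).add (he' tstar)
        have hmin : ∀ s ∈ Set.Icc (0 : ℝ) tstar, V tstar + e tstar ≤ V s + e s := by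
          intro s hs; rw [hc]; exact (hterm s hs).2.1
        have hle := left_min_deriv_nonpos htpos hd hmin
        have hsub : (θ + μ) * (V tstar + e tstar) = 0 := by rw [hc, mul_zero]
        linarith [mul_nonneg hπ.le hSa,
          mul_nonneg (by linarith : (0:ℝ) ≤ C - π) ha0.le,
          mul_pos hθ ha0, mul_pos hμ ha0]
      · -- E case
        have hd : HasDerivAt (fun t => E t + e t)
            ((β * S tstar * I tstar - (γ + μ) * E tstar) + C * e tstar) tstar :=
          (hE tstar hts0).add (he' tstar)
        have hmin : ∀ s ∈ Set.Icc (0 : ℝ) tstar, E tstar + e tstar ≤ E s + e s := by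
          intro s hs; rw [hc]; exact (hterm s hs).2.2.1
        have hle := left_min_deriv_nonpos htpos hd hmin
        have hsub : (γ + μ) * (E tstar + e tstar) = 0 := by rw [hc, mul_zero]
        linarith [mul_nonneg (mul_nonneg hβ.le hSa) hIa,
          mul_nonneg (mul_nonneg hβ.le ha0.le) (by linarith : (0:ℝ) ≤ M - S tstar),
          mul_nonneg (mul_nonneg hβ.le ha0.le) (by linarith : (0:ℝ) ≤ M - I tstar),
          mul_nonneg (mul_nonneg hβ.le ha0.le) (by linarith : (0:ℝ) ≤ 1 - e tstar),
          mul_nonneg (by linarith : (0:ℝ) ≤ C - 3 * (β * M) - β) ha0.le,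
          mul_nonneg hβM.le ha0.le, mul_pos hγ ha0, mul_pos hμ ha0]
      · -- I case
        have hd : HasDerivAt (fun t => I t + e t)
            ((γ * E tstar - (δ + τ + μ) * I tstar) + C * e tstar) tstar :=
          (hI tstar hts0).add (he' tstar)
        have hmin : ∀ s ∈ Set.Icc (0 : ℝ) tstar, I tstar + e tstar ≤ I s + e s := by
          intro s hs; rw [hc]; exact (hterm s hs).2.2.2.1
        have hle := left_min_deriv_nonpos htpos hd hmin
        have hsub : (δ + τ + μ) * (I tstar + e tstar) = 0 := by rw [hc, mul_zero]
        linarith [mul_nonneg hγ.le hEa,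
          mul_nonneg (by linarith : (0:ℝ) ≤ C - γ) ha0.le,
          mul_pos hδ ha0, mul_pos hτ ha0, mul_pos hμ ha0]
      · -- T case
        have hd : HasDerivAt (fun t => T t + e t)
            ((δ * I tstar - (α + ω + μ) * T tstar) + C * e tstar) tstar :=
          (hT tstar hts0).add (he' tstar)
        have hmin : ∀ s ∈ Set.Icc (0 : ℝ) tstar, T tstar + e tstar ≤ T s + e s := by
          intro s hs; rw [hc]; exact (hterm s hs).2.2.2.2.1
        have hle := left_min_deriv_nonpos htpos hd hmin
        have hsub : (α + ω + μ) * (T tstar + e tstar) = 0 := by rw [hc, mul_zero]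
        linarith [mul_nonneg hδ.le hIa,
          mul_nonneg (by linarith : (0:ℝ) ≤ C - δ) ha0.le,
          mul_pos hα ha0, mul_pos hω ha0, mul_pos hμ ha0]
      · -- R case
        have hd : HasDerivAt (fun t => R t + e t)
            ((α * T tstar - (η + μ) * R tstar) + C * e tstar) tstar :=
          (hR tstar hts0).add (he' tstar)
        have hmin : ∀ s ∈ Set.Icc (0 : ℝ) tstar, R tstar + e tstar ≤ R s + e s := by
          intro s hs; rw [hc]; exact (hterm s hs).2.2.2.2.2.1
        have hle := left_min_deriv_nonpos htpos hd hmin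
        have hsub : (η + μ) * (R tstar + e tstar) = 0 := by rw [hc, mul_zero]
        linarith [mul_nonneg hα.le hTa,
          mul_nonneg (by linarith : (0:ℝ) ≤ C - α) ha0.le,
          mul_pos hη ha0, mul_pos hμ ha0]
      · -- N case
        have hsum : HasDerivAt (fun t => S t + V t + E t + I t + T t + R t)
            ((Λ + η * R tstar + θ * V tstar - (β * I tstar + π + μ) * S tstar) +
             (π * S tstar - (θ + μ) * V tstar) +
             (β * S tstar * I tstar - (γ + μ) * E tstar) +
             (γ * E tstar - (δ + τ + μ) * I tstar) +
             (δ * I tstar - (α + ω + μ) * T tstar) +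
             (α * T tstar - (η + μ) * R tstar)) tstar :=
          (((((hS tstar hts0).add (hV tstar hts0)).add (hE tstar hts0)).add
            (hI tstar hts0)).add (hT tstar hts0)).add (hR tstar hts0)
        have hd : HasDerivAt (fun t => Λ / μ + 6 * e t - (S t + V t + E t + I t + T t + R t))
            ((0 + 6 * (C * e tstar)) -
             ((Λ + η * R tstar + θ * V tstar - (β * I tstar + π + μ) * S tstar) +
              (π * S tstar - (θ + μ) * V tstar) +
              (β * S tstar * I tstar - (γ + μ) * E tstar) +
              (γ * E tstar - (δ + τ + μ) * I tstar) +
              (δ * I tstar - (α + ω + μ) * T tstar) +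
              (α * T tstar - (η + μ) * R tstar))) tstar :=
          ((hasDerivAt_const tstar (Λ / μ)).add ((he' tstar).const_mul 6)).sub hsum
        have hmin : ∀ s ∈ Set.Icc (0 : ℝ) tstar,
            Λ / μ + 6 * e tstar - (S tstar + V tstar + E tstar + I tstar + T tstar + R tstar) ≤
            Λ / μ + 6 * e s - (S s + V s + E s + I s + T s + R s) := by
          intro s hs; rw [hc]; exact (hterm s hs).2.2.2.2.2.2
        have hle := left_min_deriv_nonpos htpos hd hmin
        have hsub : μ * (Λ / μ + 6 * e tstar -
            (S tstar + V tstar + E tstar + I tstar + T tstar + R tstar)) = 0 := by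
          rw [hc, mul_zero]
        linarith [mul_nonneg hτ.le hIa, mul_nonneg hω.le hTa,
          mul_nonneg (by linarith : (0:ℝ) ≤ 6 * C - τ - ω) ha0.le,
          mul_pos hμ ha0]
    -- extract the conjunction
    intro t ht
    have h := main t ht
    simp only [hf, he, le_min_iff] at h
    exact ⟨by linarith [h.1.1.1], by linarith [h.1.1.2], by linarith [h.1.2.1],
      by linarith [h.1.2.2], by linarith [h.2.1.1], by linarith [h.2.1.2],
      by linarith [h.2.2]⟩
  -- conclude by letting ε → 0
  intro t ht
  obtain ⟨q, hq⟩ : ∃ q : ℝ, q = Real.exp (C * t) := ⟨_, rfl⟩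
  have hq0 : 0 < q := by rw [hq]; exact Real.exp_pos _
  have hnn : ∀ x : ℝ, (∀ ε : ℝ, 0 < ε → ε * q ≤ 1 → -(ε * q) ≤ x) → 0 ≤ x := by
    intro x hx
    by_contra hneg
    push_neg at hneg
    have hεpos : 0 < min (1 / q) (-x / (2 * q)) := lt_min (by positivity) (div_pos (by linarith) (by linarith))
    have h1 : min (1 / q) (-x / (2 * q)) * q ≤ 1 := by
      have h0 := mul_nonneg (sub_nonneg.2 (min_le_left (1 / q) (-x / (2 * q)))) hq0.le
      have hq1 : 1 / q * q = 1 := one_div_mul_cancel hq0.ne'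
      nlinarith [h0, hq1]
    have h2 := hx _ hεpos h1
    have h3 : min (1 / q) (-x / (2 * q)) * q ≤ -x / 2 := by
      have h0 := mul_nonneg (sub_nonneg.2 (min_le_right (1 / q) (-x / (2 * q)))) hq0.le
      have hq2 : -x / (2 * q) * q = -x / 2 := by field_simp
      nlinarith [h0, hq2]
    linarith
  have hkey : ∀ ε : ℝ, 0 < ε → ε * q ≤ 1 →
      -(ε * q) ≤ S t ∧ -(ε * q) ≤ V t ∧ -(ε * q) ≤ E t ∧ -(ε * q) ≤ I t ∧
      -(ε * q) ≤ T t ∧ -(ε * q) ≤ R t ∧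
      S t + V t + E t + I t + T t + R t ≤ Λ / μ + 6 * (ε * q) := by
    intro ε hε hεq
    rw [hq] at hεq ⊢
    exact key t ht ε hε hεq t ⟨ht, le_refl t⟩
  refine ⟨hnn _ (fun ε hε hεq => (hkey ε hε hεq).1),
    hnn _ (fun ε hε hεq => (hkey ε hε hεq).2.1),
    hnn _ (fun ε hε hεq => (hkey ε hε hεq).2.2.1),
    hnn _ (fun ε hε hεq => (hkey ε hε hεq).2.2.2.1),
    hnn _ (fun ε hε hεq => (hkey ε hε hεq).2.2.2.2.1),
    hnn _ (fun ε hε hεq => (hkey ε hε hεq).2.2.2.2.2.1), ?_⟩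
  have := hnn (Λ / μ - (S t + V t + E t + I t + T t + R t)) ?_
  · linarith
  · intro ε hε hεq
    have h6 : 0 < ε / 6 := by linarith
    have h6q : ε / 6 * q ≤ 1 := by nlinarith [mul_pos hε hq0]
    have := (hkey (ε / 6) h6 h6q).2.2.2.2.2.2
    linarith
end

section
/- Let F be the 3×3 real matrix with F₁₂ = Λβ(θ+μ)/(μ(θ+π+μ)) and all other entries 0, and let W be the 3×3 real matrix with rows (γ+μ, 0, 0), (−γ, δ+τ+μ, 0), (0, −δ, α+ω+μ). Then W is invertible and the characteristic polynomial of F·W⁻¹ is X²·(X − R_v); in particular the eigenvalues of F·W⁻¹ are R_v, 0, 0, so the spectral radius of F·W⁻¹ equals R_v. -/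
set_option maxHeartbeats 1000000


open Polynomial Matrix

/-- Next-generation matrix computation for the SVEITRS tuberculosis model: the
transition matrix `W` is invertible, the characteristic polynomial of `F·W⁻¹`
is `X²·(X − R_v)`, and hence the eigenvalues of `F·W⁻¹` are exactly `R_v` and
`0` (so the spectral radius of `F·W⁻¹` equals `R_v`). -/
theorem sveitrs_next_generation_matrix
    (Λ β γ μ π η θ δ τ α ω : ℝ)
    (hΛ : 0 < Λ) (hβ : 0 < β) (hγ : 0 < γ) (hμ : 0 < μ) (hπ : 0 < π)
    (hη : 0 < η) (hθ : 0 < θ) (hδ : 0 < δ) (hτ : 0 < τ) (hα : 0 < α) (hω : 0 < ω)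
    (Rv : ℝ)
    (hRv : Rv = Λ * β * γ * (θ + μ) /
      (μ * (θ + π + μ) * (δ + τ + μ) * (γ + μ)))
    (F W : Matrix (Fin 3) (Fin 3) ℝ)
    (hF : F = !![0, Λ * β * (θ + μ) / (μ * (θ + π + μ)), 0;
                 0, 0, 0;
                 0, 0, 0])
    (hW : W = !![γ + μ, 0, 0;
                 -γ, δ + τ + μ, 0;
                 0, -δ, α + ω + μ]) :
    IsUnit W ∧
    (F * W⁻¹).charpoly = X ^ 2 * (X - C Rv) ∧
    (∀ x : ℝ, (F * W⁻¹).charpoly.IsRoot x ↔ x = Rv ∨ x = 0) := by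
  have h1 : (γ + μ) ≠ 0 := by positivity
  have h2 : (δ + τ + μ) ≠ 0 := by positivity
  have h3 : (α + ω + μ) ≠ 0 := by positivity
  have h4 : (μ * (θ + π + μ)) ≠ 0 := by positivity
  set Winv : Matrix (Fin 3) (Fin 3) ℝ :=
    !![1/(γ+μ), 0, 0;
       γ/((γ+μ)*(δ+τ+μ)), 1/(δ+τ+μ), 0;
       γ*δ/((γ+μ)*(δ+τ+μ)*(α+ω+μ)), δ/((δ+τ+μ)*(α+ω+μ)), 1/(α+ω+μ)] with hWinv
  have hmul : W * Winv = 1 := by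
    subst hW
    rw [hWinv, Matrix.mul_fin_three, Matrix.one_fin_three]
    ext i j
    fin_cases i <;> fin_cases j <;> simp [Matrix.vecHead, Matrix.vecTail] <;> field_simp <;> ring
  have hU : IsUnit W := IsUnit.of_mul_eq_one _ hmul
  have hinv : W⁻¹ = Winv := inv_eq_right_inv hmul
  have hA : F * W⁻¹ = !![Rv, Λ * β * (θ + μ) / (μ * (θ + π + μ)) / (δ+τ+μ), 0;
                         0, 0, 0; 0, 0, 0] := by
    rw [hinv, hF, hWinv, Matrix.mul_fin_three]
    ext i j
    fin_cases i <;> fin_cases j <;> simp [Matrix.vecHead, Matrix.vecTail, hRv] <;> field_simp <;> ring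
  have hcp : (F * W⁻¹).charpoly = X ^ 2 * (X - C Rv) := by
    rw [hA, Matrix.charpoly, Matrix.det_fin_three]
    simp [charmatrix_apply_eq, charmatrix_apply_ne, charmatrix_apply,
      Matrix.vecHead, Matrix.vecTail]
    ring
  refine ⟨hU, hcp, fun x => ?_⟩
  rw [hcp]
  simp only [IsRoot, eval_mul, eval_pow, eval_sub, eval_X, eval_C, mul_eq_zero,
    pow_eq_zero_iff (two_ne_zero (α := ℕ)), sub_eq_zero]
  tauto
end

section
/- Let J be the 6×6 real Jacobian matrix of the SVEITRS system at the disease-free equilibrium, with rows (−(π+μ), θ, 0, −βS₀, 0, η), (π, −(θ+μ), 0, 0, 0, 0), (0, 0, −(γ+μ), βS₀, 0, 0), (0, 0, γ, −(δ+τ+μ), 0, 0), (0, 0, 0, δ, −(α+ω+μ), 0), (0, 0, 0, 0, α, −(η+μ)), where S₀ = Λ(θ+μ)/(μ(θ+π+μ)). If R_v < 1, then every complex eigenvalue of J has strictly negative real part (so the disease-free equilibrium is locally asymptotically stable). -/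
open Matrix Polynomial

/-- Roots of a monic real quadratic with positive coefficients have negative real part. -/
lemma sveitrs_quad_root_re_neg (a b : ℝ) (ha : 0 < a) (hb : 0 < b) (z : ℂ)
    (h : z ^ 2 + (a : ℂ) * z + (b : ℂ) = 0) : z.re < 0 := by
  have hre := congrArg Complex.re h
  have him := congrArg Complex.im h
  simp [Complex.add_re, Complex.add_im, Complex.mul_re, Complex.mul_im, pow_two] at hre him
  by_contra hx
  push_neg at hx
  rcases mul_eq_zero.mp (by nlinarith : z.im * (2 * z.re + a) = 0) with h1 | h1
  · nlinarith
  · nlinarith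

/-- Characteristic polynomial of a 2×2 real matrix. -/
lemma sveitrs_charpoly_fin2 (M : Matrix (Fin 2) (Fin 2) ℝ) :
    M.charpoly = X ^ 2 - C (M 0 0 + M 1 1) * X + C (M 0 0 * M 1 1 - M 0 1 * M 1 0) := by
  rw [Matrix.charpoly, Matrix.det_fin_two]
  simp [charmatrix_apply, Matrix.diagonal_apply]
  ring

set_option maxHeartbeats 1000000 in
/-- Factorization of the characteristic polynomial of the SVEITRS Jacobian. -/
lemma sveitrs_charpoly_factor (π μ θ η β γ δ τ α ω s : ℝ)
    (J : Matrix (Fin 6) (Fin 6) ℝ)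
    (hJ : J = !![-(π + μ), θ, 0, -(β * s), 0, η;
        π, -(θ + μ), 0, 0, 0, 0;
        0, 0, -(γ + μ), β * s, 0, 0;
        0, 0, γ, -(δ + τ + μ), 0, 0;
        0, 0, 0, δ, -(α + ω + μ), 0;
        0, 0, 0, 0, α, -(η + μ)]) :
    J.charpoly
    = (X ^ 2 + C (γ + δ + τ + 2 * μ) * X + C ((γ + μ) * (δ + τ + μ) - γ * (β * s)))
      * ((X ^ 2 + C (π + θ + 2 * μ) * X + C (μ * (π + θ + μ)))
      * ((X + C (α + ω + μ)) * (X + C (η + μ)))) := by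
  -- permutation putting the (E, I) coordinates first: involution swapping 0↔2, 1↔3
  let σ : Equiv.Perm (Fin 6) :=
    ⟨fun i => ![2, 3, 0, 1, 4, 5] i, fun i => ![2, 3, 0, 1, 4, 5] i,
      by decide, by decide⟩
  let e : Fin 2 ⊕ Fin 4 ≃ Fin 6 := finSumFinEquiv.trans σ
  have h1 : J.charpoly = (J.submatrix e e).charpoly := by
    rw [← Matrix.charpoly_reindex e.symm J]
    congr 1
  have h2 : J.submatrix e e =
      fromBlocks !![-(γ + μ), β * s; γ, -(δ + τ + μ)] 0
        !![0, -(β * s); 0, 0; 0, δ; 0, 0]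
        !![-(π + μ), θ, 0, η; π, -(θ + μ), 0, 0;
           0, 0, -(α + ω + μ), 0; 0, 0, α, -(η + μ)] := by
    subst hJ
    ext i j
    rcases i with i | i <;> rcases j with j | j <;> fin_cases i <;> fin_cases j <;>
      simp [e, σ, Matrix.fromBlocks, Matrix.submatrix, finSumFinEquiv] <;> rfl
  have h3 : (!![-(π + μ), θ, 0, η; π, -(θ + μ), 0, 0;
           0, 0, -(α + ω + μ), 0; 0, 0, α, -(η + μ)] : Matrix (Fin 4) (Fin 4) ℝ)
      = (fromBlocks !![-(π + μ), θ; π, -(θ + μ)] !![0, η; 0, 0]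
          0 !![-(α + ω + μ), 0; α, -(η + μ)]).submatrix
          finSumFinEquiv.symm finSumFinEquiv.symm := by
    ext i j
    fin_cases i <;> fin_cases j <;> rfl
  rw [h1, h2, Matrix.charpoly_fromBlocks_zero₁₂, h3,
    ← Matrix.reindex_apply, Matrix.charpoly_reindex, Matrix.charpoly_fromBlocks_zero₂₁,
    sveitrs_charpoly_fin2, sveitrs_charpoly_fin2, sveitrs_charpoly_fin2]
  simp only [Matrix.cons_val', Matrix.cons_val_zero, Matrix.cons_val_one, Matrix.head_cons,
    Matrix.empty_val', Matrix.cons_val_fin_one, Matrix.head_fin_const, Matrix.of_apply]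
  simp only [C_add, C_mul, C_sub, C_neg, C_0, map_ofNat, mul_zero, zero_mul, sub_zero]
  ring

/-- Local asymptotic stability of the disease-free equilibrium of the SVEITRS
tuberculosis model: if `R_v < 1`, every complex eigenvalue of the Jacobian `J`
at the disease-free equilibrium (i.e. every complex root of its characteristic
polynomial) has strictly negative real part. -/
theorem sveitrs_dfe_locally_asymptotically_stable
    (Λ β γ μ π η θ δ τ α ω : ℝ)
    (hΛ : 0 < Λ) (hβ : 0 < β) (hγ : 0 < γ) (hμ : 0 < μ) (hπ : 0 < π)
    (hη : 0 < η) (hθ : 0 < θ) (hδ : 0 < δ) (hτ : 0 < τ) (hα : 0 < α) (hω : 0 < ω)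
    (S₀ : ℝ) (hS₀ : S₀ = Λ * (θ + μ) / (μ * (θ + π + μ)))
    (Rv : ℝ)
    (hRv : Rv = Λ * β * γ * (θ + μ) /
      (μ * (θ + π + μ) * (δ + τ + μ) * (γ + μ)))
    (J : Matrix (Fin 6) (Fin 6) ℝ)
    (hJ : J = !![-(π + μ), θ, 0, -(β * S₀), 0, η;
                 π, -(θ + μ), 0, 0, 0, 0;
                 0, 0, -(γ + μ), β * S₀, 0, 0;
                 0, 0, γ, -(δ + τ + μ), 0, 0;
                 0, 0, 0, δ, -(α + ω + μ), 0;
                 0, 0, 0, 0, α, -(η + μ)])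
    (hRv1 : Rv < 1) :
    ∀ z : ℂ, (J.charpoly.map (algebraMap ℝ ℂ)).IsRoot z → z.re < 0 := by
  intro z hz
  have hfac := sveitrs_charpoly_factor π μ θ η β γ δ τ α ω S₀ J hJ
  rw [hfac] at hz
  simp only [Polynomial.IsRoot, Polynomial.map_mul, Polynomial.map_add, Polynomial.map_pow,
    Polynomial.map_X, Polynomial.map_C, Polynomial.eval_mul, Polynomial.eval_add,
    Polynomial.eval_pow, Polynomial.eval_X, Polynomial.eval_C,
    Complex.coe_algebraMap] at hz
  -- positivity of the constant coefficient of the infection block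
  have hb1 : γ * (β * S₀) = Rv * ((δ + τ + μ) * (γ + μ)) := by
    rw [hRv, hS₀]
    field_simp
  have hpos1 : 0 < (γ + μ) * (δ + τ + μ) - γ * (β * S₀) := by
    have hp : (0:ℝ) < (δ + τ + μ) * (γ + μ) := by positivity
    rw [hb1]
    have hm := mul_pos (sub_pos.mpr hRv1) hp
    linarith only [hm]
  rcases mul_eq_zero.mp hz with h | h
  · exact sveitrs_quad_root_re_neg _ _ (by positivity) hpos1 z h
  rcases mul_eq_zero.mp h with h | h
  · exact sveitrs_quad_root_re_neg _ _ (by positivity) (by positivity) z h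
  rcases mul_eq_zero.mp h with h | h
  · have := congrArg Complex.re h
    simp at this
    linarith
  · have := congrArg Complex.re h
    simp at this
    linarith
end

section
/- Let J be the 6×6 real Jacobian matrix of the SVEITRS system at the disease-free equilibrium, with rows (−(π+μ), θ, 0, −βS₀, 0, η), (π, −(θ+μ), 0, 0, 0, 0), (0, 0, −(γ+μ), βS₀, 0, 0), (0, 0, γ, −(δ+τ+μ), 0, 0), (0, 0, 0, δ, −(α+ω+μ), 0), (0, 0, 0, 0, α, −(η+μ)), where S₀ = Λ(θ+μ)/(μ(θ+π+μ)). If R_v > 1, then J has a real eigenvalue that is strictly positive (so the disease-free equilibrium is unstable). -/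
open Matrix Polynomial

set_option maxRecDepth 100000
set_option maxHeartbeats 4000000

private lemma eval_charpoly_aux' (M : Matrix (Fin 6) (Fin 6) ℝ) (x : ℝ) :
    eval x M.charpoly = (x • (1 : Matrix (Fin 6) (Fin 6) ℝ) - M).det := by
  rw [Matrix.charpoly, ← Polynomial.coe_evalRingHom, RingHom.map_det]
  congr 1
  ext i j
  by_cases h : i = j <;>
    simp [h, Matrix.charmatrix_apply, Matrix.one_apply, Matrix.diagonal_apply]

private lemma det_aux' (a b c d e f g h p q r s t u x : ℝ) :
    (x • (1 : Matrix (Fin 6) (Fin 6) ℝ) -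
      !![a, b, 0, c, 0, d;
         e, f, 0, 0, 0, 0;
         0, 0, g, h, 0, 0;
         0, 0, p, q, 0, 0;
         0, 0, 0, r, s, 0;
         0, 0, 0, 0, t, u]).det
      = ((x-a)*(x-f) - b*e) * (x-s) * (x-u) * ((x-g)*(x-q) - h*p) := by
  simp (config := {decide := true}) [Matrix.det_succ_row_zero, Fin.sum_univ_succ,
    Fin.succAbove, Matrix.sub_apply, Matrix.smul_apply, Matrix.one_apply, smul_eq_mul]
  ring

/-- Instability of the disease-free equilibrium of the SVEITRS tuberculosis
model: if `R_v > 1`, the Jacobian `J` at the disease-free equilibrium has a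
strictly positive real eigenvalue (a strictly positive real root of its
characteristic polynomial). -/
theorem sveitrs_dfe_unstable
    (Λ β γ μ π η θ δ τ α ω : ℝ)
    (hΛ : 0 < Λ) (hβ : 0 < β) (hγ : 0 < γ) (hμ : 0 < μ) (hπ : 0 < π)
    (hη : 0 < η) (hθ : 0 < θ) (hδ : 0 < δ) (hτ : 0 < τ) (hα : 0 < α) (hω : 0 < ω)
    (S₀ : ℝ) (hS₀ : S₀ = Λ * (θ + μ) / (μ * (θ + π + μ)))
    (Rv : ℝ)
    (hRv : Rv = Λ * β * γ * (θ + μ) /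
      (μ * (θ + π + μ) * (δ + τ + μ) * (γ + μ)))
    (J : Matrix (Fin 6) (Fin 6) ℝ)
    (hJ : J = !![-(π + μ), θ, 0, -(β * S₀), 0, η;
                 π, -(θ + μ), 0, 0, 0, 0;
                 0, 0, -(γ + μ), β * S₀, 0, 0;
                 0, 0, γ, -(δ + τ + μ), 0, 0;
                 0, 0, 0, δ, -(α + ω + μ), 0;
                 0, 0, 0, 0, α, -(η + μ)])
    (hRv1 : 1 < Rv) :
    ∃ x : ℝ, 0 < x ∧ J.charpoly.IsRoot x := by
  set b : ℝ := (γ + μ) + (δ + τ + μ) with hb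
  set c : ℝ := (γ + μ) * (δ + τ + μ) - γ * (β * S₀) with hc
  have hbpos : 0 < b := by positivity
  have hden : 0 < μ * (θ + π + μ) * (δ + τ + μ) * (γ + μ) := by positivity
  have hd2 : (0:ℝ) < μ * (θ + π + μ) := by positivity
  have hcneg : c < 0 := by
    have h1 : μ * (θ + π + μ) * (δ + τ + μ) * (γ + μ) < Λ * β * γ * (θ + μ) := by
      have := (lt_div_iff₀ hden).mp (hRv ▸ hRv1)
      linarith
    rw [hc, hS₀, sub_neg,
      show γ * (β * (Λ * (θ + μ) / (μ * (θ + π + μ))))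
        = γ * (β * (Λ * (θ + μ))) / (μ * (θ + π + μ)) by ring,
      lt_div_iff₀ hd2]
    nlinarith
  have hdisc : 0 < b ^ 2 - 4 * c := by nlinarith
  set x : ℝ := (-b + Real.sqrt (b ^ 2 - 4 * c)) / 2 with hx
  have hsqrt : Real.sqrt (b ^ 2 - 4 * c) ^ 2 = b ^ 2 - 4 * c :=
    Real.sq_sqrt hdisc.le
  have hsb : b < Real.sqrt (b ^ 2 - 4 * c) := by
    nlinarith [Real.sqrt_nonneg (b ^ 2 - 4 * c)]
  have hxpos : 0 < x := by rw [hx]; linarith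
  have hquad : x ^ 2 + b * x + c = 0 := by
    rw [hx]; field_simp; nlinarith
  refine ⟨x, hxpos, ?_⟩
  have heval : eval x J.charpoly = 0 := by
    rw [eval_charpoly_aux', hJ, det_aux']
    have h2 : (x - -(γ + μ)) * (x - -(δ + τ + μ)) - β * S₀ * γ
        = x ^ 2 + b * x + c := by rw [hb, hc]; ring
    rw [h2, hquad, mul_zero]
  exact heval
end

section
/- Let (S, V) : [0, ∞) → ℝ² be a differentiable solution of the disease-free subsystem S' = Λ + θV − (π + μ)S, V' = πS − (θ + μ)V. Then S(t) → Λ(θ+μ)/(μ(θ+π+μ)) and V(t) → Λπ/(μ(θ+π+μ)) as t → ∞. -/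
open Filter Topology

/-- Any function satisfying `f' = -k f` on `[0,∞)` with `k > 0` tends to `0`. -/
lemma decay_to_zero (k : ℝ) (hk : 0 < k) (f : ℝ → ℝ)
    (hf : ∀ t ≥ (0:ℝ), HasDerivAt f (-k * f t) t) :
    Tendsto f atTop (𝓝 0) := by
  set g : ℝ → ℝ := fun t => f t * Real.exp (k * t) with hg_def
  have hg : ∀ t ≥ (0:ℝ), HasDerivAt g 0 t := by
    intro t ht
    have he : HasDerivAt (fun t : ℝ => Real.exp (k * t)) (Real.exp (k * t) * k) t := by
      simpa using ((hasDerivAt_id t).const_mul k).exp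
    have h2 := (hf t ht).mul he
    refine h2.congr_deriv ?_
    ring
  have hconst : ∀ t ≥ (0:ℝ), g t = g 0 := by
    intro t ht
    exact constant_of_has_deriv_right_zero
      (fun x hx => (hg x hx.1).continuousAt.continuousWithinAt)
      (fun x hx => (hg x hx.1).hasDerivWithinAt) t ⟨ht, le_refl t⟩
  have hlim : Tendsto (fun t => g 0 * Real.exp (-(k * t))) atTop (𝓝 0) := by
    have h1 : Tendsto (fun t : ℝ => k * t) atTop atTop := tendsto_id.const_mul_atTop hk
    have h2 : Tendsto (fun t : ℝ => -(k * t)) atTop atBot := tendsto_neg_atTop_atBot.comp h1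
    have h3 := Real.tendsto_exp_atBot.comp h2
    simpa using h3.const_mul (g 0)
  refine Tendsto.congr' ?_ hlim
  filter_upwards [eventually_ge_atTop (0:ℝ)] with t ht
  have h0 : g t = g 0 := hconst t ht
  have hexp : Real.exp (k * t) * Real.exp (-(k * t)) = 1 := by
    rw [← Real.exp_add]; simp
  calc g 0 * Real.exp (-(k * t)) = g t * Real.exp (-(k * t)) := by rw [h0]
    _ = f t * (Real.exp (k * t) * Real.exp (-(k * t))) := by rw [hg_def]; ring
    _ = f t := by rw [hexp]; ring

/-- Global convergence of the disease-free subsystem of the SVEITRS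
tuberculosis model: every differentiable solution of
`S' = Λ + θV − (π+μ)S`, `V' = πS − (θ+μ)V` converges to the disease-free
equilibrium `(Λ(θ+μ)/(μ(θ+π+μ)), Λπ/(μ(θ+π+μ)))` as `t → ∞`. -/
theorem sveitrs_disease_free_subsystem_converges
    (Λ μ π θ : ℝ)
    (hΛ : 0 < Λ) (hμ : 0 < μ) (hπ : 0 < π) (hθ : 0 < θ)
    (S V : ℝ → ℝ)
    (hS : ∀ t ≥ (0 : ℝ), HasDerivAt S (Λ + θ * V t - (π + μ) * S t) t)
    (hV : ∀ t ≥ (0 : ℝ), HasDerivAt V (π * S t - (θ + μ) * V t) t) :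
    Tendsto S atTop (𝓝 (Λ * (θ + μ) / (μ * (θ + π + μ)))) ∧
    Tendsto V atTop (𝓝 (Λ * π / (μ * (θ + π + μ)))) := by
  have hden : μ * (θ + π + μ) ≠ 0 := by positivity
  have hπθ : π + θ ≠ 0 := by positivity
  set A : ℝ := Λ * (θ + μ) / (μ * (θ + π + μ)) with hA
  set B : ℝ := Λ * π / (μ * (θ + π + μ)) with hB
  -- u = S + V - (A + B) satisfies u' = -μ u
  have hu : Tendsto (fun t => S t + V t - (A + B)) atTop (𝓝 0) := by
    apply decay_to_zero μ hμ
    intro t ht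
    have h := ((hS t ht).add (hV t ht)).sub_const (A + B)
    refine h.congr_deriv ?_
    rw [hA, hB]
    field_simp
    ring
  -- w = πS - θV - (πA - θB) satisfies w' = -(θ+π+μ) w
  have hw : Tendsto (fun t => π * S t - θ * V t - (π * A - θ * B)) atTop (𝓝 0) := by
    apply decay_to_zero (θ + π + μ) (by positivity)
    intro t ht
    have h := (((hS t ht).const_mul π).sub ((hV t ht).const_mul θ)).sub_const (π * A - θ * B)
    refine h.congr_deriv ?_
    rw [hA, hB]
    field_simp
    ring
  have hSc : Tendsto (fun t => S t - A) atTop (𝓝 0) := by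
    have h := ((hu.const_mul θ).add hw).div_const (π + θ)
    simp only [mul_zero, add_zero, zero_div] at h
    refine h.congr fun t => ?_
    field_simp
    ring
  have hVc : Tendsto (fun t => V t - B) atTop (𝓝 0) := by
    have h := ((hu.const_mul π).sub hw).div_const (π + θ)
    simp only [mul_zero, sub_zero, zero_div] at h
    refine h.congr fun t => ?_
    field_simp
    ring
  constructor
  · have := hSc.add_const A
    simpa using this
  · have := hVc.add_const B
    simpa using this
end

section
/- If R_v > 1, then the SVEITRS system has an equilibrium point (S*, V*, E*, I*, T*, R*) (all six right-hand sides vanish) with all six coordinates strictly positive, and at this equilibrium S* = (γ+μ)(δ+τ+μ)/(βγ). -/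
set_option maxHeartbeats 1000000

/-- Existence of a (strictly positive) endemic equilibrium of the SVEITRS
tuberculosis model when `R_v > 1`, with susceptible coordinate
`S* = (γ+μ)(δ+τ+μ)/(βγ)`. -/
theorem sveitrs_endemic_equilibrium_exists
    (Λ β γ μ π η θ δ τ α ω : ℝ)
    (hΛ : 0 < Λ) (hβ : 0 < β) (hγ : 0 < γ) (hμ : 0 < μ) (hπ : 0 < π)
    (hη : 0 < η) (hθ : 0 < θ) (hδ : 0 < δ) (hτ : 0 < τ) (hα : 0 < α) (hω : 0 < ω)
    (Rv : ℝ)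
    (hRv : Rv = Λ * β * γ * (θ + μ) /
      (μ * (θ + π + μ) * (δ + τ + μ) * (γ + μ)))
    (hRv1 : 1 < Rv) :
    ∃ S V E I T R : ℝ,
      Λ + η * R + θ * V - (β * I + π + μ) * S = 0 ∧
      π * S - (θ + μ) * V = 0 ∧
      β * S * I - (γ + μ) * E = 0 ∧
      γ * E - (δ + τ + μ) * I = 0 ∧
      δ * I - (α + ω + μ) * T = 0 ∧
      α * T - (η + μ) * R = 0 ∧
      0 < S ∧ 0 < V ∧ 0 < E ∧ 0 < I ∧ 0 < T ∧ 0 < R ∧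
      S = (γ + μ) * (δ + τ + μ) / (β * γ) := by
  have h1 : (0:ℝ) < θ + μ := by linarith
  have h2 : (0:ℝ) < γ + μ := by linarith
  have h3 : (0:ℝ) < δ + τ + μ := by linarith
  have h4 : (0:ℝ) < α + ω + μ := by linarith
  have h5 : (0:ℝ) < η + μ := by linarith
  have hP : (0:ℝ) < θ + π + μ := by linarith
  have hβγ : (0:ℝ) < β * γ := by positivity
  obtain ⟨S, hS⟩ : ∃ x : ℝ, x = (γ + μ) * (δ + τ + μ) / (β * γ) := ⟨_, rfl⟩
  have hSpos : 0 < S := by rw [hS]; positivity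
  -- key inequality from Rv > 1
  have hkey : μ * (θ + π + μ) * (δ + τ + μ) * (γ + μ) < Λ * β * γ * (θ + μ) := by
    have hden : (0:ℝ) < μ * (θ + π + μ) * (δ + τ + μ) * (γ + μ) := by positivity
    rw [hRv, lt_div_iff₀ hden, one_mul] at hRv1
    linarith
  obtain ⟨c, hc⟩ : ∃ x : ℝ, x = β * S - η * α * δ / ((η + μ) * (α + ω + μ)) := ⟨_, rfl⟩
  have hβS : β * S = (γ + μ) * (δ + τ + μ) / γ := by
    rw [hS]; field_simp
  have hcpos : 0 < c := by
    rw [hc, hβS, sub_pos]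
    have h6 : η * α * δ / ((η + μ) * (α + ω + μ)) < δ := by
      rw [div_lt_iff₀ (by positivity)]
      nlinarith [mul_pos hδ (mul_pos hη hω), mul_pos hδ (mul_pos hμ h4)]
    have h7 : δ < (γ + μ) * (δ + τ + μ) / γ := by
      rw [lt_div_iff₀ hγ]
      nlinarith
    linarith
  obtain ⟨num, hnum⟩ : ∃ x : ℝ, x = Λ - μ * (θ + π + μ) * S / (θ + μ) := ⟨_, rfl⟩
  have hnumpos : 0 < num := by
    rw [hnum, sub_pos, div_lt_iff₀ h1, hS]
    have he : μ * (θ + π + μ) * ((γ + μ) * (δ + τ + μ) / (β * γ)) =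
        μ * (θ + π + μ) * ((γ + μ) * (δ + τ + μ)) / (β * γ) := by ring
    rw [he, div_lt_iff₀ hβγ]
    nlinarith
  obtain ⟨I, hI⟩ : ∃ x : ℝ, x = num / c := ⟨_, rfl⟩
  have hIpos : 0 < I := by rw [hI]; positivity
  obtain ⟨V, hV⟩ : ∃ x : ℝ, x = π * S / (θ + μ) := ⟨_, rfl⟩
  have hVpos : 0 < V := by rw [hV]; positivity
  obtain ⟨E, hE⟩ : ∃ x : ℝ, x = (δ + τ + μ) * I / γ := ⟨_, rfl⟩
  have hEpos : 0 < E := by rw [hE]; positivity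
  obtain ⟨T, hT⟩ : ∃ x : ℝ, x = δ * I / (α + ω + μ) := ⟨_, rfl⟩
  have hTpos : 0 < T := by rw [hT]; positivity
  obtain ⟨R, hR⟩ : ∃ x : ℝ, x = α * T / (η + μ) := ⟨_, rfl⟩
  have hRpos : 0 < R := by rw [hR]; positivity
  -- cleared-denominator defining relations (variables kept atomic)
  have hVs : (θ + μ) * V = π * S := by rw [hV, mul_div_cancel₀ _ h1.ne']
  have hEs : γ * E = (δ + τ + μ) * I := by
    rw [hE, mul_comm γ, div_mul_cancel₀ _ hγ.ne']
  have hTs : (α + ω + μ) * T = δ * I := by rw [hT, mul_div_cancel₀ _ h4.ne']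
  have hRs : (η + μ) * R = α * T := by rw [hR, mul_div_cancel₀ _ h5.ne']
  have hIc : c * I = num := by rw [hI, mul_div_cancel₀ _ hcpos.ne']
  have hβSγ : β * S * γ = (γ + μ) * (δ + τ + μ) := by
    rw [hβS, div_mul_cancel₀ _ hγ.ne']
  have hc' : c * ((η + μ) * (α + ω + μ)) =
      β * S * ((η + μ) * (α + ω + μ)) - η * α * δ := by
    rw [hc]; field_simp
  have hnum' : num * (θ + μ) = Λ * (θ + μ) - μ * (θ + π + μ) * S := by
    rw [hnum]; field_simp
  refine ⟨S, V, E, I, T, R, ?_, ?_, ?_, ?_, ?_, ?_, hSpos, hVpos,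
    hEpos, hIpos, hTpos, hRpos, hS⟩
  · -- first equation
    have key : ((θ + μ) * ((η + μ) * (α + ω + μ))) *
        (Λ + η * R + θ * V - (β * I + π + μ) * S) = 0 := by
      linear_combination (-((θ + μ) * ((η + μ) * (α + ω + μ)))) * hIc +
        (I * (θ + μ)) * hc' + (-((η + μ) * (α + ω + μ))) * hnum' +
        (θ * ((η + μ) * (α + ω + μ))) * hVs + (η * α * (θ + μ)) * hTs +
        (η * (θ + μ) * (α + ω + μ)) * hRs
    have hD : ((θ + μ) * ((η + μ) * (α + ω + μ))) ≠ 0 := by positivity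
    exact (mul_eq_zero.mp key).resolve_left hD
  · linarith [hVs]
  · have key : γ * (β * S * I - (γ + μ) * E) = 0 := by
      linear_combination I * hβSγ - (γ + μ) * hEs
    exact (mul_eq_zero.mp key).resolve_left hγ.ne'
  · linarith [hEs]
  · linarith [hTs]
  · linarith [hRs]
end

section
/- If R_v ≤ 1, then the SVEITRS system has no equilibrium point (S, V, E, I, T, R) with S > 0 and I > 0; i.e., no endemic equilibrium exists when the effective reproduction number is at most one. -/
set_option maxHeartbeats 1000000


/-- Nonexistence of an endemic equilibrium of the SVEITRS tuberculosis model
when `R_v ≤ 1`: no equilibrium has both `S > 0` and `I > 0`. -/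
theorem sveitrs_no_endemic_equilibrium
    (Λ β γ μ π η θ δ τ α ω : ℝ)
    (hΛ : 0 < Λ) (hβ : 0 < β) (hγ : 0 < γ) (hμ : 0 < μ) (hπ : 0 < π)
    (hη : 0 < η) (hθ : 0 < θ) (hδ : 0 < δ) (hτ : 0 < τ) (hα : 0 < α) (hω : 0 < ω)
    (Rv : ℝ)
    (hRv : Rv = Λ * β * γ * (θ + μ) /
      (μ * (θ + π + μ) * (δ + τ + μ) * (γ + μ)))
    (hRv1 : Rv ≤ 1) :
    ¬ ∃ S V E I T R : ℝ,
      Λ + η * R + θ * V - (β * I + π + μ) * S = 0 ∧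
      π * S - (θ + μ) * V = 0 ∧
      β * S * I - (γ + μ) * E = 0 ∧
      γ * E - (δ + τ + μ) * I = 0 ∧
      δ * I - (α + ω + μ) * T = 0 ∧
      α * T - (η + μ) * R = 0 ∧
      0 < S ∧ 0 < I := by
  rintro ⟨S, V, E, I, T, R, h1, h2, h3, h4, h5, h6, hS, hI⟩
  have hden : 0 < μ * (θ + π + μ) * (δ + τ + μ) * (γ + μ) := by positivity
  have hRv' : Λ * β * γ * (θ + μ) ≤ μ * (θ + π + μ) * (δ + τ + μ) * (γ + μ) := by
    rw [hRv, div_le_one hden] at hRv1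
    exact hRv1
  have hβγS : β * γ * S = (γ + μ) * (δ + τ + μ) := by
    have key : (β * γ * S) * I = ((γ + μ) * (δ + τ + μ)) * I := by
      linear_combination γ * h3 + (γ + μ) * h4
    exact mul_right_cancel₀ (ne_of_gt hI) key
  have hβγ : 0 < β * γ := by positivity
  have e1 : μ * (θ + π + μ) * S * (β * γ) = μ * (θ + π + μ) * (δ + τ + μ) * (γ + μ) := by
    linear_combination (μ * (θ + π + μ)) * hβγS
  have hkey1 : Λ * (θ + μ) ≤ μ * (θ + π + μ) * S := by
    have h : Λ * (θ + μ) * (β * γ) ≤ μ * (θ + π + μ) * S * (β * γ) := by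
      rw [e1]; linarith [hRv']
    exact le_of_mul_le_mul_right h hβγ
  have h1' : Λ * (θ + μ) = β * I * S * (θ + μ) + μ * (θ + π + μ) * S
      - η * R * (θ + μ) := by linear_combination (θ + μ) * h1 + θ * h2
  have hP : (0:ℝ) < θ + μ := by linarith
  have h7 : β * I * S ≤ η * R := by
    have h : (β * I * S) * (θ + μ) ≤ (η * R) * (θ + μ) := by nlinarith [hkey1, h1']
    exact le_of_mul_le_mul_right h hP
  have hCDR : (α + ω + μ) * ((η + μ) * R) = α * (δ * I) := by
    linear_combination (-(α + ω + μ)) * h6 - α * h5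
  have hc : (0:ℝ) ≤ γ * (α + ω + μ) * (η + μ) := by positivity
  have h8 := mul_le_mul_of_nonneg_left h7 hc
  have hfinal : (γ + μ) * (δ + τ + μ) * (α + ω + μ) * (η + μ) * I
      ≤ γ * δ * α * η * I := by
    calc (γ + μ) * (δ + τ + μ) * (α + ω + μ) * (η + μ) * I
        = γ * (α + ω + μ) * (η + μ) * (β * I * S) := by
          linear_combination (-((α + ω + μ) * (η + μ) * I)) * hβγS
      _ ≤ γ * (α + ω + μ) * (η + μ) * (η * R) := h8
      _ = γ * δ * α * η * I := by linear_combination (γ * η) * hCDR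
  have hgd : γ * δ < (γ + μ) * (δ + τ + μ) := by nlinarith
  have hae : α * η < (α + ω + μ) * (η + μ) := by nlinarith
  have hgt : γ * δ * α * η < (γ + μ) * (δ + τ + μ) * (α + ω + μ) * (η + μ) := by
    calc γ * δ * α * η = (γ * δ) * (α * η) := by ring
      _ < ((γ + μ) * (δ + τ + μ)) * ((α + ω + μ) * (η + μ)) :=
          mul_lt_mul'' hgd hae (by positivity) (by positivity)
      _ = (γ + μ) * (δ + τ + μ) * (α + ω + μ) * (η + μ) := by ring
  linarith [mul_lt_mul_of_pos_right hgt hI, hfinal]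
end

section
/- Let Λ, β, γ, μ, π, θ, δ, τ be positive reals and regard R_v = Λβγ(θ+μ)/(μ(θ+π+μ)(δ+τ+μ)(γ+μ)) as a function of μ. The normalized sensitivity index with respect to μ satisfies Υ_μ = (∂R_v/∂μ)·(μ/R_v) = −[θ/(θ+μ) + μ/(θ+π+μ) + μ/(δ+τ+μ) + μ/(γ+μ)], which is strictly negative. -/
/-- Sensitivity index of the effective reproduction number
`R_v = Λβγ(θ+μ)/(μ(θ+π+μ)(δ+τ+μ)(γ+μ))` with respect to the natural death
rate `μ`: `Υ_μ = −[θ/(θ+μ) + μ/(θ+π+μ) + μ/(δ+τ+μ) + μ/(γ+μ)]`, which is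
strictly negative. -/
theorem sveitrs_sensitivity_mu
    (Λ β γ μ π θ δ τ : ℝ)
    (hΛ : 0 < Λ) (hβ : 0 < β) (hγ : 0 < γ) (hμ : 0 < μ) (hπ : 0 < π)
    (hθ : 0 < θ) (hδ : 0 < δ) (hτ : 0 < τ)
    (Rv : ℝ)
    (hRv : Rv = Λ * β * γ * (θ + μ) /
      (μ * (θ + π + μ) * (δ + τ + μ) * (γ + μ))) :
    deriv (fun x => Λ * β * γ * (θ + x) /
        (x * (θ + π + x) * (δ + τ + x) * (γ + x))) μ * (μ / Rv) =
      -(θ / (θ + μ) + μ / (θ + π + μ) + μ / (δ + τ + μ) + μ / (γ + μ)) ∧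
    -(θ / (θ + μ) + μ / (θ + π + μ) + μ / (δ + τ + μ) + μ / (γ + μ)) < 0 := by
  have h1 : (0:ℝ) < θ + μ := by linarith
  have h2 : (0:ℝ) < θ + π + μ := by linarith
  have h3 : (0:ℝ) < δ + τ + μ := by linarith
  have h4 : (0:ℝ) < γ + μ := by linarith
  have hD : μ * (θ + π + μ) * (δ + τ + μ) * (γ + μ) ≠ 0 := by positivity
  constructor
  · have hN : HasDerivAt (fun x : ℝ => Λ * β * γ * (θ + x)) (Λ * β * γ) μ := by
      simpa using ((hasDerivAt_id μ).const_add θ).const_mul (Λ * β * γ)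
    have hd1 : HasDerivAt (fun x : ℝ => x * (θ + π + x))
        (1 * (θ + π + μ) + μ * 1) μ :=
      (hasDerivAt_id μ).mul ((hasDerivAt_id μ).const_add (θ + π))
    have hd2 : HasDerivAt (fun x : ℝ => x * (θ + π + x) * (δ + τ + x))
        ((1 * (θ + π + μ) + μ * 1) * (δ + τ + μ) + μ * (θ + π + μ) * 1) μ :=
      hd1.mul ((hasDerivAt_id μ).const_add (δ + τ))
    have hd3 : HasDerivAt (fun x : ℝ => x * (θ + π + x) * (δ + τ + x) * (γ + x))
        (((1 * (θ + π + μ) + μ * 1) * (δ + τ + μ) + μ * (θ + π + μ) * 1) * (γ + μ)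
          + μ * (θ + π + μ) * (δ + τ + μ) * 1) μ :=
      hd2.mul ((hasDerivAt_id μ).const_add γ)
    have hq : HasDerivAt (fun x => Λ * β * γ * (θ + x) /
        (x * (θ + π + x) * (δ + τ + x) * (γ + x))) _ μ := hN.div hd3 hD
    rw [hq.deriv, hRv]
    have hNum : Λ * β * γ * (θ + μ) ≠ 0 := by positivity
    field_simp
    ring
  · have : 0 < θ / (θ + μ) + μ / (θ + π + μ) + μ / (δ + τ + μ) + μ / (γ + μ) := by
      positivity
    linarith
end
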